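/- In any fair division instance where m = n (the number of goods equals the number of agents) and every agent values every good positively, every EQ1 allocation assigns exactly one good to each agent. -/
import Mathlib


open Finset

/-- An allocation is a partition of the goods among the agents. -/
def isPartition {ι γ : Type*} [Fintype ι] [Fintype γ] [DecidableEq γ]
    (A : ι → Finset γ) : Prop :=
  (∀ i j, i ≠ j → Disjoint (A i) (A j)) ∧ Finset.univ.biUnion A = Finset.univ

/-- Additive value of a bundle. -/
def bundleVal {γ : Type*} (v : γ → ℚ) (S : Finset γ) : ℚ := ∑ g ∈ S, v g

/-- EQ1: for every pair of agents `i, j` with `A i` nonempty, some good can be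
removed from `A i` so that `i`'s value drops to at most `j`'s value. -/
def EQ1 {ι γ : Type*} [DecidableEq γ] (v : ι → γ → ℚ) (A : ι → Finset γ) : Prop :=
  ∀ i j, A i ≠ ∅ → ∃ g ∈ A i, bundleVal (v i) ((A i).erase g) ≤ bundleVal (v j) (A j)

/-- when the number of goods equals the number of agents and all
values are positive, every EQ1 allocation gives each agent exactly one good. -/
theorem stmt17 (n : ℕ) (v : Fin n → Fin n → ℚ) (hv : ∀ i g, 0 < v i g)
    (A : Fin n → Finset (Fin n)) (hpart : isPartition A) (heq1 : EQ1 v A) :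
    ∀ i, (A i).card = 1 := by
  obtain ⟨hdisj, hcover⟩ := hpart
  have hsum : ∑ i, (A i).card = n := by
    rw [← Finset.card_biUnion (fun i _ j _ hij => hdisj i j hij), hcover,
      Finset.card_univ, Fintype.card_fin]
  -- all bundles nonempty
  have hne : ∀ j, A j ≠ ∅ := by
    intro j hj
    have hle : ∀ i, (A i).card ≤ 1 := by
      intro i
      rcases eq_or_ne (A i) ∅ with h | h
      · simp [h]
      · obtain ⟨g, hg, hval⟩ := heq1 i j h
        have hzero : bundleVal (v j) (A j) = 0 := by simp [hj, bundleVal]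
        rw [hzero] at hval
        have herase : (A i).erase g = ∅ := by
          by_contra hne
          have : 0 < bundleVal (v i) ((A i).erase g) :=
            Finset.sum_pos (fun x _ => hv i x) (Finset.nonempty_iff_ne_empty.2 hne)
          linarith
        have := Finset.card_erase_of_mem hg
        rw [herase] at this
        simp at this
        omega
    have hlt : ∑ i, (A i).card < ∑ _i : Fin n, 1 := by
      apply Finset.sum_lt_sum (fun i _ => hle i) ⟨j, Finset.mem_univ j, by simp [hj]⟩
    simp [hsum] at hlt
  intro i
  by_contra hcard
  have h1 : ∀ k, 1 ≤ (A k).card :=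
    fun k => Finset.card_pos.2 (Finset.nonempty_iff_ne_empty.2 (hne k))
  have hlt : ∑ _k : Fin n, 1 < ∑ k, (A k).card :=
    Finset.sum_lt_sum (fun k _ => h1 k)
      ⟨i, Finset.mem_univ i, by have := h1 i; omega⟩
  simp [hsum] at hlt
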